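/- For z, z′ ∈ ℂ³, one has σ(z) = σ(z′) if and only if z′ = g·z for some g ∈ T²; that is, the fibres of σ are exactly the T²-orbits in ℂ³. -/

import Mathlib

/-- The action of `(θ, φ) ∈ T²` on `ℂ³`,
`(e^{iθ}, e^{iφ})·(z₁,z₂,z₃) = (e^{iθ}z₁, e^{iφ}z₂, e^{−i(θ+φ)}z₃)`. -/
noncomputable def torusAct (θ φ : ℝ) (z : ℂ × ℂ × ℂ) : ℂ × ℂ × ℂ :=
  (Complex.exp (θ * Complex.I) * z.1,
   Complex.exp (φ * Complex.I) * z.2.1,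
   Complex.exp (-(θ + φ) * Complex.I) * z.2.2)

/-- The invariant map `σ = (σ₁,…,σ₅) : ℂ³ → ℝ⁵` with `σ₁ + iσ₂ = −conj(z₁z₂z₃)`,
`σ₃ = ½(|z₂|² − |z₃|²)`, `σ₄ = ½(|z₃|² − |z₁|²)`, `σ₅ = |z₃|²`. -/
noncomputable def sigmaMap (z : ℂ × ℂ × ℂ) : Fin 5 → ℝ :=
  ![(-(starRingEnd ℂ) (z.1 * z.2.1 * z.2.2)).re,
    (-(starRingEnd ℂ) (z.1 * z.2.1 * z.2.2)).im,
    (‖z.2.1‖ ^ 2 - ‖z.2.2‖ ^ 2) / 2,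
    (‖z.2.2‖ ^ 2 - ‖z.1‖ ^ 2) / 2,
    ‖z.2.2‖ ^ 2]

lemma phase_exists (a b : ℂ) (h : ‖a‖ = ‖b‖) :
    ∃ t : ℝ, b = Complex.exp (t * Complex.I) * a := by
  obtain ⟨s, hs⟩ : ∃ s : ℝ, a = ‖a‖ * Complex.exp (s * Complex.I) :=
    ⟨a.arg, (Complex.norm_mul_exp_arg_mul_I a).symm⟩
  obtain ⟨u, hu⟩ : ∃ u : ℝ, b = ‖b‖ * Complex.exp (u * Complex.I) :=
    ⟨b.arg, (Complex.norm_mul_exp_arg_mul_I b).symm⟩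
  refine ⟨u - s, ?_⟩
  rw [hu, hs, h, mul_left_comm, ← Complex.exp_add]
  congr 2
  push_cast
  ring

/-- The fibres of `σ` are exactly the `T²`-orbits in `ℂ³`. -/
theorem sigma_fibres_eq_orbits (z w : ℂ × ℂ × ℂ) :
    sigmaMap z = sigmaMap w ↔ ∃ θ φ : ℝ, w = torusAct θ φ z := by
  obtain ⟨z1, z2, z3⟩ := z
  obtain ⟨w1, w2, w3⟩ := w
  constructor
  · intro h
    have e0 := congrFun h 0
    have e1 := congrFun h 1
    have e2 := congrFun h 2
    have e3 := congrFun h 3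
    have e4 := congrFun h 4
    simp only [sigmaMap, Matrix.cons_val_zero, Matrix.cons_val_one, Matrix.head_cons,
      Matrix.cons_val_two, Matrix.tail_cons, Matrix.cons_val_three, Matrix.cons_val_four] at e0 e1 e2 e3 e4
    have habs3 : ‖z3‖ = ‖w3‖ := by
      nlinarith [norm_nonneg z3, norm_nonneg w3]
    have habs2 : ‖z2‖ = ‖w2‖ := by
      nlinarith [norm_nonneg z2, norm_nonneg w2]
    have habs1 : ‖z1‖ = ‖w1‖ := by
      nlinarith [norm_nonneg z1, norm_nonneg w1]
    have hc : -(starRingEnd ℂ) (z1 * z2 * z3) = -(starRingEnd ℂ) (w1 * w2 * w3) :=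
      Complex.ext e0 e1
    have hP : z1 * z2 * z3 = w1 * w2 * w3 := (starRingEnd ℂ).injective (neg_inj.mp hc)
    by_cases hz3 : z3 = 0
    · have hw3 : w3 = 0 := by
        have : ‖w3‖ = 0 := by rw [← habs3, hz3, norm_zero]
        exact norm_eq_zero.mp this
      obtain ⟨θ, hθ⟩ := phase_exists z1 w1 habs1
      obtain ⟨φ, hφ⟩ := phase_exists z2 w2 habs2
      exact ⟨θ, φ, by simp only [torusAct, Prod.mk.injEq]; exact ⟨hθ, hφ, by rw [hz3, hw3, mul_zero]⟩⟩
    · by_cases hz1 : z1 = 0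
      · obtain ⟨φ, hφ⟩ := phase_exists z2 w2 habs2
        obtain ⟨s, hs⟩ := phase_exists z3 w3 habs3
        have hw1 : w1 = 0 := by
          have : ‖w1‖ = 0 := by rw [← habs1, hz1, norm_zero]
          exact norm_eq_zero.mp this
        refine ⟨-s - φ, φ, ?_⟩
        simp only [torusAct, Prod.mk.injEq]
        refine ⟨by rw [hz1, hw1, mul_zero], hφ, ?_⟩
        rw [hs]
        congr 1
        push_cast
        ring_nf
      · by_cases hz2 : z2 = 0
        · obtain ⟨θ, hθ⟩ := phase_exists z1 w1 habs1
          obtain ⟨s, hs⟩ := phase_exists z3 w3 habs3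
          have hw2 : w2 = 0 := by
            have : ‖w2‖ = 0 := by rw [← habs2, hz2, norm_zero]
            exact norm_eq_zero.mp this
          refine ⟨θ, -s - θ, ?_⟩
          simp only [torusAct, Prod.mk.injEq]
          refine ⟨hθ, by rw [hz2, hw2, mul_zero], ?_⟩
          rw [hs]
          congr 1
          push_cast
          ring_nf
        · obtain ⟨θ, hθ⟩ := phase_exists z1 w1 habs1
          obtain ⟨φ, hφ⟩ := phase_exists z2 w2 habs2
          refine ⟨θ, φ, ?_⟩
          have hE : Complex.exp (θ * Complex.I) * Complex.exp (φ * Complex.I) *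
              Complex.exp (-(↑θ + ↑φ) * Complex.I) = 1 := by
            rw [← Complex.exp_add, ← Complex.exp_add, ← Complex.exp_zero]
            congr 1
            ring
          have key : w3 = Complex.exp (-(↑θ + ↑φ) * Complex.I) * z3 := by
            rw [hθ, hφ] at hP
            have hne : Complex.exp (θ * Complex.I) * z1 * (Complex.exp (φ * Complex.I) * z2) ≠ 0 :=
              mul_ne_zero (mul_ne_zero (Complex.exp_ne_zero _) hz1)
                (mul_ne_zero (Complex.exp_ne_zero _) hz2)
            apply mul_left_cancel₀ hne
            linear_combination -hP - z1 * z2 * z3 * hE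
          simp only [torusAct, Prod.mk.injEq]
          exact ⟨hθ, hφ, key⟩
  · rintro ⟨θ, φ, hw⟩
    rw [hw]
    have hE : Complex.exp (θ * Complex.I) * Complex.exp (φ * Complex.I) *
        Complex.exp (-(↑θ + ↑φ) * Complex.I) = 1 := by
      rw [← Complex.exp_add, ← Complex.exp_add, ← Complex.exp_zero]
      congr 1
      ring
    have hp : Complex.exp (θ * Complex.I) * z1 * (Complex.exp (φ * Complex.I) * z2) *
        (Complex.exp (-(↑θ + ↑φ) * Complex.I) * z3) = z1 * z2 * z3 := by
      linear_combination z1 * z2 * z3 * hE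
    have ha1 : ‖Complex.exp (θ * Complex.I) * z1‖ = ‖z1‖ := by
      rw [norm_mul, Complex.norm_exp_ofReal_mul_I, one_mul]
    have ha2 : ‖Complex.exp (φ * Complex.I) * z2‖ = ‖z2‖ := by
      rw [norm_mul, Complex.norm_exp_ofReal_mul_I, one_mul]
    have ha3 : ‖Complex.exp (-(↑θ + ↑φ) * Complex.I) * z3‖ = ‖z3‖ := by
      rw [norm_mul, show (-(↑θ + ↑φ) * Complex.I : ℂ) = (↑(-(θ + φ)) * Complex.I) by push_cast; ring,
        Complex.norm_exp_ofReal_mul_I, one_mul]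
    funext i
    fin_cases i <;>
      simp only [sigmaMap, torusAct, Matrix.cons_val_zero, Matrix.cons_val_one, Matrix.head_cons,
        Matrix.cons_val_two, Matrix.tail_cons, Matrix.cons_val_three, Matrix.cons_val_four,
        hp, ha1, ha2, ha3, Fin.isValue]
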